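/- Let b ≥ 2 and let W = w_0 w_1 w_2 ⋯ be an infinite word over the alphabet {0, 1, ..., b−1} that is not eventually periodic. Let C(n) be the number of words of length n that occur as factors of W at infinitely many positions. Then C(n) is unbounded as n → ∞. -/

import Mathlib

namespace Stmt15

variable {b : ℕ} (W : ℕ → Fin b)

def occ (n : ℕ) (u : Fin n → Fin b) : Set ℕ := {j : ℕ | ∀ i : Fin n, W (j + i) = u i}

def R (n : ℕ) : Set (Fin n → Fin b) := {u | (occ W n u).Infinite}

lemma infinite_fiber {S : Set ℕ} (hS : S.Infinite) {β : Type*} [Finite β] (f : ℕ → β) :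
    ∃ x, {j | j ∈ S ∧ f j = x}.Infinite := by
  by_contra h
  push_neg at h
  apply hS
  have hS' : S = ⋃ x : β, {j | j ∈ S ∧ f j = x} := by ext j; simp
  rw [hS']
  exact Set.finite_iUnion h

lemma occ_snoc (n : ℕ) (u : Fin n → Fin b) (x : Fin b) :
    occ W (n+1) (Fin.snoc u x) = {j | j ∈ occ W n u ∧ W (j + n) = x} := by
  ext j
  constructor
  · intro h
    refine ⟨fun i => ?_, ?_⟩
    · have := h i.castSucc
      simpa [Fin.snoc_castSucc] using this
    · have := h (Fin.last n)
      simpa [Fin.snoc_last] using this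
  · rintro ⟨h1, h2⟩ i
    refine Fin.lastCases ?_ ?_ i
    · simpa [Fin.snoc_last] using h2
    · intro i; simpa [Fin.snoc_castSucc] using h1 i

lemma R_nonempty (n : ℕ) : (R W n).Nonempty := by
  obtain ⟨u, hu⟩ := infinite_fiber (Set.infinite_univ (α := ℕ))
    (fun j => (fun i : Fin n => W (j + i)))
  refine ⟨u, Set.Infinite.mono ?_ hu⟩
  intro j hj i
  exact congrFun hj.2 i

lemma exists_ext {n : ℕ} {u : Fin n → Fin b} (hu : u ∈ R W n) :
    ∃ x, Fin.snoc u x ∈ R W (n+1) := by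
  obtain ⟨x, hx⟩ := infinite_fiber hu (fun j => W (j + n))
  refine ⟨x, ?_⟩
  rw [R, Set.mem_setOf_eq, occ_snoc]
  exact hx

lemma eventually_recurrent (n : ℕ) :
    ∃ N, ∀ j, N ≤ j → (fun i : Fin n => W (j + i)) ∈ R W n := by
  have hfin : {j : ℕ | (fun i : Fin n => W (j + i)) ∉ R W n}.Finite := by
    have hsub : {j : ℕ | (fun i : Fin n => W (j + i)) ∉ R W n} ⊆
        ⋃ u ∈ (R W n)ᶜ, occ W n u := by
      intro j hj
      exact Set.mem_biUnion hj (fun i => rfl)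
    refine Set.Finite.subset (Set.Finite.biUnion (Set.toFinite _) ?_) hsub
    intro u hu
    exact Set.not_infinite.mp hu
  obtain ⟨N, hN⟩ := hfin.bddAbove
  refine ⟨N + 1, fun j hj => ?_⟩
  by_contra h
  have := hN h
  omega

lemma periodic_of_unique (n : ℕ) (hn : 0 < n)
    (huniq : ∀ u ∈ R W n, ∀ x y : Fin b,
      Fin.snoc u x ∈ R W (n+1) → Fin.snoc u y ∈ R W (n+1) → x = y) :
    ∃ N p : ℕ, 0 < p ∧ ∀ k, N ≤ k → W (k + p) = W k := by
  obtain ⟨N₁, hN₁⟩ := eventually_recurrent W n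
  obtain ⟨N₂, hN₂⟩ := eventually_recurrent W (n+1)
  set N := max N₁ N₂ with hN
  set g : ℕ → (Fin n → Fin b) := fun j => fun i => W (j + i) with hg
  have snoc_win : ∀ j, (fun i : Fin (n+1) => W (j + i)) = Fin.snoc (g j) (W (j + n)) := by
    intro j
    funext i
    refine Fin.lastCases ?_ ?_ i
    · simp [Fin.snoc_last]
    · intro i; simp [Fin.snoc_castSucc, hg]
  have key : ∀ j j', N ≤ j → N ≤ j' → g j = g j' → W (j + n) = W (j' + n) := by
    intro j j' hj hj' hgg
    have h1 : Fin.snoc (g j) (W (j + n)) ∈ R W (n+1) := by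
      rw [← snoc_win]; exact hN₂ j (le_trans (le_max_right _ _) hj)
    have h2 : Fin.snoc (g j') (W (j' + n)) ∈ R W (n+1) := by
      rw [← snoc_win]; exact hN₂ j' (le_trans (le_max_right _ _) hj')
    exact huniq (g j) (hN₁ j (le_trans (le_max_left _ _) hj)) _ _ h1
      (by rw [hgg]; exact h2)
  have step : ∀ j j', N ≤ j → N ≤ j' → g j = g j' → g (j+1) = g (j'+1) := by
    intro j j' hj hj' hgg
    funext i
    show W (j + 1 + (i : ℕ)) = W (j' + 1 + (i : ℕ))
    have hle : (i : ℕ) + 1 ≤ n := i.isLt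
    rcases lt_or_eq_of_le hle with h | h
    · have := congrFun hgg ⟨(i : ℕ) + 1, h⟩
      simp only [hg] at this
      rw [show j + 1 + (i:ℕ) = j + ((i:ℕ)+1) by omega,
        show j' + 1 + (i:ℕ) = j' + ((i:ℕ)+1) by omega]
      exact this
    · have := key j j' hj hj' hgg
      rw [show j + 1 + (i:ℕ) = j + n by omega, show j' + 1 + (i:ℕ) = j' + n by omega]
      exact this
  have iter : ∀ j j', N ≤ j → N ≤ j' → g j = g j' → ∀ k, g (j+k) = g (j'+k) := by
    intro j j' hj hj' hgg k
    induction k with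
    | zero => simpa using hgg
    | succ k ih =>
      have := step (j+k) (j'+k) (by omega) (by omega) ih
      rw [show j + (k+1) = j + k + 1 by omega, show j' + (k+1) = j' + k + 1 by omega]
      exact this
  obtain ⟨u, hu⟩ := infinite_fiber (Set.Ici_infinite N) g
  obtain ⟨j₁, hj₁⟩ := hu.nonempty
  obtain ⟨j₂, hj₂, hlt⟩ := hu.exists_gt j₁
  refine ⟨j₁, j₂ - j₁, by omega, fun k hk => ?_⟩
  have hgg : g j₁ = g j₂ := hj₁.2.trans hj₂.2.symm
  have h := iter j₁ j₂ hj₁.1 hj₂.1 hgg (k - j₁)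
  have e1 := congrFun h ⟨0, hn⟩
  simp only [hg] at e1
  rw [show j₁ + (k - j₁) + ((⟨0, hn⟩ : Fin n) : ℕ) = k by simp; omega,
    show j₂ + (k - j₁) + ((⟨0, hn⟩ : Fin n) : ℕ) = k + (j₂ - j₁) by simp; omega] at e1
  exact e1.symm

end Stmt15

open Stmt15 in
/-- If `W` is an infinite word over `{0,…,b-1}` that is not eventually periodic, then
the number `C(n)` of length-`n` factors occurring at infinitely many positions of `W`
is unbounded. -/
theorem stmt_15 (b : ℕ) (hb : 2 ≤ b) (W : ℕ → Fin b)
    (hnp : ¬∃ N p : ℕ, 0 < p ∧ ∀ k, N ≤ k → W (k + p) = W k) :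
    ∀ m : ℕ, ∃ n : ℕ,
      m ≤ {u : Fin n → Fin b | {j : ℕ | ∀ i : Fin n, W (j + i) = u i}.Infinite}.ncard := by
  have hR : ∀ n, 0 < n → ¬ (∀ u ∈ R W n, ∀ x y : Fin b,
      Fin.snoc u x ∈ R W (n+1) → Fin.snoc u y ∈ R W (n+1) → x = y) := by
    intro n hn h
    exact hnp (periodic_of_unique W n hn h)
  have grow : ∀ k : ℕ, k + 1 ≤ (R W (k + 1)).ncard := by
    intro k
    induction k with
    | zero =>
      have hne := R_nonempty W 1
      have hfin : (R W 1).Finite := Set.toFinite _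
      have := (Set.ncard_pos hfin).mpr hne
      exact this
    | succ k ih =>
      have hP := hR (k+1) (by omega)
      push_neg at hP
      obtain ⟨u, hu, x, y, hx, hy, hxy⟩ := hP
      have hsub : R W (k+1) ⊆
          (fun v : Fin ((k+1)+1) → Fin b => Fin.init v) '' (R W ((k+1)+1) \ {Fin.snoc u x}) := by
        intro v hv
        obtain ⟨z, hz⟩ := exists_ext W hv
        by_cases hvz : Fin.snoc v z = (Fin.snoc u x : Fin ((k+1)+1) → Fin b)
        · have hvu : v = u := by
            have := congrArg Fin.init hvz
            simpa [Fin.init_snoc] using this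
          refine ⟨Fin.snoc u y, ⟨hy, ?_⟩, by simp [Fin.init_snoc, hvu]⟩
          simp only [Set.mem_singleton_iff]
          intro hc
          apply hxy
          have := congrFun hc (Fin.last _)
          simpa [Fin.snoc_last] using this.symm
        · exact ⟨Fin.snoc v z, ⟨hz, hvz⟩, by simp [Fin.init_snoc]⟩
      have h1 : (R W (k+1)).ncard ≤ (R W ((k+1)+1) \ {Fin.snoc u x}).ncard := by
        have ha := Set.ncard_le_ncard hsub (Set.toFinite _)
        have hb' := Set.ncard_image_le (s := R W ((k+1)+1) \ {Fin.snoc u x})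
          (f := fun v : Fin ((k+1)+1) → Fin b => Fin.init v) (Set.toFinite _)
        omega
      have h2 : (R W ((k+1)+1) \ {Fin.snoc u x}).ncard < (R W ((k+1)+1)).ncard :=
        Set.ncard_diff_singleton_lt_of_mem hx (Set.toFinite _)
      omega
  intro m
  exact ⟨m + 1, le_trans (by omega) (grow m)⟩
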